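/- For every natural number n, det(J_n) = 2^n · (−b/a)^{ε(n)}, where ε(n) = 0 if n is even and 1 if n is odd. Equivalently, det(J_n) = 2^n if n is even and det(J_n) = −2^n·(b/a) if n is odd. -/
import Mathlib


noncomputable def JM (a b : ℝ) : ℕ → Matrix (Fin 2) (Fin 2) ℝ
  | 0 => 1
  | 1 => !![b, 2 * b / a; 1, 0]
  | n + 2 => (if Even (n + 2) then a else b) • JM a b (n + 1) + (2 : ℝ) • JM a b n

lemma JM_step (a b : ℝ) (n : ℕ) (i j : Fin 2) :
    JM a b (n + 2) i j = (if Even n then a else b) * JM a b (n + 1) i j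
      + 2 * JM a b n i j := by
  show ((if Even (n + 2) then a else b) • JM a b (n + 1) + (2 : ℝ) • JM a b n) i j = _
  have : Even (n + 2) ↔ Even n := by simp [Nat.even_add]
  simp only [Matrix.add_apply, Matrix.smul_apply, smul_eq_mul, this]

lemma key (a b : ℝ) (ha : a ≠ 0) (n : ℕ) :
    (JM a b n).det = 2 ^ n * (-(b / a)) ^ (n % 2) ∧
    (JM a b (n + 1)).det = 2 ^ (n + 1) * (-(b / a)) ^ ((n + 1) % 2) ∧
    JM a b (n + 1) 0 0 * JM a b n 1 1 + JM a b (n + 1) 1 1 * JM a b n 0 0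
      - JM a b (n + 1) 0 1 * JM a b n 1 0 - JM a b (n + 1) 1 0 * JM a b n 0 1
      = (-2) ^ n * b := by
  induction n with
  | zero =>
    have h0 : JM a b 0 = 1 := rfl
    have h1 : JM a b 1 = !![b, 2 * b / a; 1, 0] := rfl
    refine ⟨?_, ?_, ?_⟩
    · simp [h0]
    · rw [h1, Matrix.det_fin_two_of]; ring
    · rw [h0, h1]; simp [Matrix.one_apply]
  | succ n ih =>
    obtain ⟨hD, hD1, hE⟩ := ih
    set c : ℝ := if Even n then a else b with hc
    have hdet2 : (JM a b (n + 2)).det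
        = c ^ 2 * (JM a b (n + 1)).det + 4 * (JM a b n).det
          + 2 * c * ((JM a b (n + 1)) 0 0 * JM a b n 1 1 + JM a b (n + 1) 1 1 * JM a b n 0 0
            - JM a b (n + 1) 0 1 * JM a b n 1 0 - JM a b (n + 1) 1 0 * JM a b n 0 1) := by
      rw [Matrix.det_fin_two, Matrix.det_fin_two, Matrix.det_fin_two,
        JM_step, JM_step, JM_step, JM_step]
      ring
    have hE2 : JM a b (n + 2) 0 0 * JM a b (n + 1) 1 1 + JM a b (n + 2) 1 1 * JM a b (n + 1) 0 0
        - JM a b (n + 2) 0 1 * JM a b (n + 1) 1 0 - JM a b (n + 2) 1 0 * JM a b (n + 1) 0 1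
        = 2 * c * (JM a b (n + 1)).det + 2 * ((JM a b (n + 1)) 0 0 * JM a b n 1 1
            + JM a b (n + 1) 1 1 * JM a b n 0 0
            - JM a b (n + 1) 0 1 * JM a b n 1 0 - JM a b (n + 1) 1 0 * JM a b n 0 1) := by
      rw [Matrix.det_fin_two, JM_step, JM_step, JM_step, JM_step]
      ring
    refine ⟨hD1, ?_, ?_⟩
    · rw [hdet2, hD, hD1, hE]
      rcases Nat.even_or_odd n with h | h
      · have hm : n % 2 = 0 := Nat.even_iff.mp h
        have hm1 : (n + 1) % 2 = 1 := by omega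
        have hm2 : (n + 2) % 2 = 0 := by omega
        have hneg : (-2 : ℝ) ^ n = 2 ^ n := h.neg_pow 2
        rw [hc, if_pos h, hm, hm1, hm2, hneg]
        field_simp
        ring
      · have hm : n % 2 = 1 := Nat.odd_iff.mp h
        have hm1 : (n + 1) % 2 = 0 := by omega
        have hm2 : (n + 2) % 2 = 1 := by omega
        have hneg : (-2 : ℝ) ^ n = -(2 ^ n) := h.neg_pow 2
        rw [hc, if_neg (Nat.not_even_iff_odd.mpr h), hm, hm1, hm2, hneg]
        field_simp
        ring
    · rw [hE2, hD1, hE]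
      rcases Nat.even_or_odd n with h | h
      · have hm : n % 2 = 0 := Nat.even_iff.mp h
        have hm1 : (n + 1) % 2 = 1 := by omega
        have hneg : (-2 : ℝ) ^ n = 2 ^ n := h.neg_pow 2
        have hneg1 : (-2 : ℝ) ^ (n + 1) = -(2 ^ (n + 1)) := by
          rw [pow_succ, pow_succ, hneg]; ring
        rw [hc, if_pos h, hm1, hneg, hneg1]
        field_simp
        ring
      · have hm : n % 2 = 1 := Nat.odd_iff.mp h
        have hm1 : (n + 1) % 2 = 0 := by omega
        have hneg : (-2 : ℝ) ^ n = -(2 ^ n) := h.neg_pow 2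
        have hneg1 : (-2 : ℝ) ^ (n + 1) = 2 ^ (n + 1) := by
          rw [pow_succ, pow_succ, hneg]; ring
        rw [hc, if_neg (Nat.not_even_iff_odd.mpr h), hm1, hneg, hneg1]
        ring

theorem stmt3 (a b : ℝ) (ha : a ≠ 0) (hb : b ≠ 0) (n : ℕ) :
    (JM a b n).det = 2 ^ n * (-(b / a)) ^ (n % 2) := by
  exact (key a b ha n).1
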